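/- For each i ∈ ℕ and δ ∈ (0,1), define g_{i,δ} ∈ L¹[0,1] and g ∈ L¹[0,1] as in the Rademacher graphon construction. Then ‖g_{i,δ} − g‖₁ = ((4 + 2δ)·2^{−i} + 2δ)/9. -/

import Mathlib

open MeasureTheory Set
open scoped Classical

noncomputable section

/-- For `z ∈ [0,1)`, `brk z` is the smallest `k` with `z + 2^{-k} < 1`. -/
def brk (z : ℝ) : ℕ := sInf {k : ℕ | z + (1/2 : ℝ) ^ k < 1}

/-- The eight parts of the Rademacher graphon, as subintervals of `[0,1]`;
all have length `1/9` except `pC`, of length `2/9`. -/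
def pA : Set ℝ := Ico 0 (1/9)
def pA' : Set ℝ := Ico (1/9) (2/9)
def pB : Set ℝ := Ico (2/9) (3/9)
def pB' : Set ℝ := Ico (3/9) (4/9)
def pB'' : Set ℝ := Ico (4/9) (5/9)
def pC : Set ℝ := Ico (5/9) (7/9)
def pC' : Set ℝ := Ico (7/9) (8/9)
def pD : Set ℝ := Ico (8/9) 1

/-- One-sided description of the Rademacher graphon; coordinates inside each part are
relative positions (`9*x - …`, and `(9*x-5)/2` inside `pC`). -/
def WRo (x y : ℝ) : ℝ :=
  if x ∈ pA ∧ y ∈ pA then (if brk (9*x) ≠ brk (9*y) then 1 else 0)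
  else if x ∈ pA' ∧ y ∈ pA' then (if brk (9*x-1) ≠ brk (9*y-1) then 1 else 0)
  else if x ∈ pA ∧ y ∈ pA' then (if brk (9*x) = brk (9*y-1) then 1 else 0)
  else if x ∈ pA ∧ y ∈ pB then (if 9*x + (9*y-2) ≤ 1 then 1 else 0)
  else if x ∈ pA ∧ y ∈ pB'' then (if 1 ≤ 9*x + (9*y-4) then 1 else 0)
  else if x ∈ pA' ∧ y ∈ pB' then (if (9*x-1) + (9*y-3) ≤ 1 then 1 else 0)
  else if x ∈ pA' ∧ y ∈ pB'' then (if 9*y-4 ≤ 9*x-1 then 1 else 0)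
  else if x ∈ pB ∧ y ∈ pB then (if 1 ≤ (9*x-2) + (9*y-2) then 1 else 0)
  else if x ∈ pB' ∧ y ∈ pB' then (if 1 ≤ (9*x-3) + (9*y-3) then 1 else 0)
  else if x ∈ pA ∧ y ∈ pC then
    (if Even ⌊(9*y-5)/2 * (2:ℝ) ^ brk (9*x)⌋ then 1 else 0)
  else if x ∈ pA' ∧ y ∈ pC' then
    (if (1 - (1/2:ℝ) ^ brk (9*x-1) - (9*x-1)) * (2:ℝ) ^ brk (9*x-1) + (9*y-7) ≤ 1
      then 1 else 0)
  else if x ∈ pC' ∧ y ∈ pC' then (if 1 ≤ (9*x-7) + (9*y-7) then 1 else 0)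
  else if x ∈ pA' ∧ y ∈ pC then
    (if Even ⌊(9*y-5)/2 * (2:ℝ) ^ brk (9*x-1)⌋
      then (1 - (1/2:ℝ) ^ brk (9*x-1) - (9*x-1)) * (2:ℝ) ^ brk (9*x-1) else 0)
  else if x ∈ pC ∧ y ∈ pC then (if 1 ≤ (9*x-5)/2 + (9*y-5)/2 then 3/4 else 0)
  else if (x ∈ pA' ∨ x ∈ pB') ∧ y ∈ pD then 0.2
  else if x ∈ pB'' ∧ y ∈ pD then 0.4
  else if x ∈ pC' ∧ y ∈ pD then 0.8
  else 0

/-- The Rademacher graphon `W_R` (symmetrization of `WRo`; for each pair at most one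
order matches a case, and all values are nonnegative). -/
def WR (x y : ℝ) : ℝ := max (WRo x y) (WRo y x)

end
noncomputable section

/-- The limit function `g` from Proposition: `1` on `A' ∪ B'' ∪ C'`, `0.2` on `D`, else `0`. -/
def gLim : ℝ → ℝ := fun x =>
  if x ∈ pA' ∪ pB'' ∪ pC' then 1 else if x ∈ pD then 0.2 else 0

/-- The functions `g_{i,δ}` from the Rademacher graphon construction
(coordinates inside parts are relative positions). -/
def gFam (i : ℕ) (δ : ℝ) : ℝ → ℝ := fun x =>
  if x ∈ pA then (if brk (9*x) = i then 1 else 0)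
  else if x ∈ pA' then (if brk (9*x-1) ≠ i then 1 else 0)
  else if x ∈ pB' then (if 9*x-3 ≤ (1+δ) * (1/2:ℝ)^i then 1 else 0)
  else if x ∈ pB'' then (if 9*x-4 ≤ 1 - (1+δ) * (1/2:ℝ)^i then 1 else 0)
  else if x ∈ pC then (if Even ⌊(2:ℝ)^i * ((9*x-5)/2)⌋ then δ else 0)
  else if x ∈ pC' then (if 9*x-7 ≤ 1-δ then 1 else 0)
  else if x ∈ pD then 0.2
  else 0

end



-- a.e. outside countable set
lemma ae_except {s : Set ℝ} (hs : s.Countable) {p : ℝ → Prop} (h : ∀ x ∉ s, p x) :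
    ∀ᵐ x : ℝ, p x := by
  have h0 : (volume : Measure ℝ) s = 0 := hs.measure_zero _
  filter_upwards [measure_eq_zero_iff_ae_notMem.mp h0] with x hx using h x hx

lemma congr_key {f g : ℝ → ℝ} {a b : ℝ} (hab : a ≤ b)
    (hfg : ∀ᵐ x : ℝ, x ∈ Set.Ioc a b → f x = g x)
    (hg : IntervalIntegrable g volume a b) :
    IntervalIntegrable f volume a b ∧ (∫ x in a..b, f x) = ∫ x in a..b, g x := by
  have hΙ : Set.uIoc a b = Set.Ioc a b := Set.uIoc_of_le hab
  have hres : f =ᵐ[volume.restrict (Set.Ioc a b)] g := by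
    filter_upwards [ae_restrict_mem measurableSet_Ioc, ae_restrict_of_ae hfg] with x hx h2
    exact h2 hx
  constructor
  · rw [intervalIntegrable_iff, hΙ] at hg ⊢
    exact hg.congr hres.symm
  · exact intervalIntegral.integral_congr_ae (by rwa [hΙ])


lemma indicator_ii (l r c : ℝ) (a b : ℝ) :
    IntervalIntegrable (Set.indicator (Set.Ioc l r) fun _ => c) volume a b := by
  have h : Integrable (Set.indicator (Set.Ioc l r) fun _ => c) volume := by
    apply (integrableOn_const (hs := ?_)).integrable_indicator measurableSet_Ioc
    exact measure_Ioc_lt_top.ne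
  exact h.intervalIntegrable

lemma intInd {a b l r : ℝ} (c : ℝ) (h1 : a ≤ l) (h2 : l ≤ r) (h3 : r ≤ b) :
    (∫ x in a..b, Set.indicator (Set.Ioc l r) (fun _ => c) x) = c * (r - l) := by
  rw [intervalIntegral.integral_of_le (h1.trans (h2.trans h3)),
      MeasureTheory.integral_indicator measurableSet_Ioc,
      Measure.restrict_restrict measurableSet_Ioc,
      Set.inter_eq_left.mpr (Set.Ioc_subset_Ioc h1 h3),
      MeasureTheory.setIntegral_const, Real.volume_real_Ioc_of_le h2, smul_eq_mul]
  ring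

-- combined piece lemma
lemma piece {f : ℝ → ℝ} {a b l r : ℝ} (c : ℝ) (h1 : a ≤ l) (h2 : l ≤ r) (h3 : r ≤ b)
    {s : Set ℝ} (hs : s.Countable)
    (hf : ∀ x ∈ Set.Ioc a b, x ∉ s → f x = Set.indicator (Set.Ioc l r) (fun _ => c) x) :
    IntervalIntegrable f volume a b ∧ (∫ x in a..b, f x) = c * (r - l) := by
  have hae : ∀ᵐ x : ℝ, x ∈ Set.Ioc a b → f x = Set.indicator (Set.Ioc l r) (fun _ => c) x := by
    have h0 : (volume : Measure ℝ) s = 0 := hs.measure_zero _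
    filter_upwards [measure_eq_zero_iff_ae_notMem.mp h0] with x hx h using hf x h hx
  have key := congr_key (h1.trans (h2.trans h3)) hae (indicator_ii l r c a b)
  exact ⟨key.1, key.2.trans (intInd c h1 h2 h3)⟩

lemma meas_dyad (n : ℕ) (c : ℝ) :
    Measurable fun u : ℝ => (if Even ⌊(2:ℝ)^n * u⌋ then c else (0:ℝ)) := by
  have hfl : Measurable fun u : ℝ => ⌊(2:ℝ)^n * u⌋ := (measurable_const.mul measurable_id).floor
  have hset : MeasurableSet {u : ℝ | Even ⌊(2:ℝ)^n * u⌋} := hfl (MeasurableSet.of_discrete (s := {k : ℤ | Even k}))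
  exact Measurable.ite hset measurable_const measurable_const

lemma ii_dyad (n : ℕ) (c : ℝ) (a b : ℝ) :
    IntervalIntegrable (fun u : ℝ => if Even ⌊(2:ℝ)^n * u⌋ then c else (0:ℝ)) volume a b := by
  have hc : IntervalIntegrable (fun _ : ℝ => |c|) volume a b := intervalIntegrable_const
  rw [intervalIntegrable_iff] at hc ⊢
  refine hc.mono' ((meas_dyad n c).aestronglyMeasurable.restrict) (ae_of_all _ fun x => ?_)
  split <;> simp

lemma E_eq : ∀ n : ℕ, 1 ≤ n →
    (∫ t in (0:ℝ)..1, if Even ⌊(2:ℝ)^n * t⌋ then (1:ℝ) else 0) = 1/2 := by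
  refine Nat.le_induction ?_ ?_
  · -- base case n = 1
    have hp : (IntervalIntegrable (fun t => if Even ⌊(2:ℝ)^1 * t⌋ then (1:ℝ) else 0) volume 0 1) ∧
        (∫ t in (0:ℝ)..1, if Even ⌊(2:ℝ)^1 * t⌋ then (1:ℝ) else 0) = 1 * (1/2 - 0) := by
      refine piece 1 le_rfl (by norm_num) (by norm_num) (s := {(1/2 : ℝ), 1})
        ((Set.countable_singleton _).insert _) ?_
      intro x hx hs
      simp only [Set.mem_insert_iff, Set.mem_singleton_iff, not_or] at hs
      obtain ⟨hs1, hs2⟩ := hs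
      obtain ⟨hx0, hx1⟩ := hx
      rcases lt_or_gt_of_ne hs1 with h | h
      · have : ⌊(2:ℝ)^1 * x⌋ = 0 := by
          rw [Int.floor_eq_zero_iff]; constructor <;> simp <;> nlinarith
        rw [if_pos (by rw [this]; exact Even.zero),
          Set.indicator_of_mem (by constructor <;> linarith) ]
      · have hx1' : x < 1 := lt_of_le_of_ne hx1 hs2
        have : ⌊(2:ℝ)^1 * x⌋ = 1 := by
          rw [Int.floor_eq_iff]; constructor <;> [simp; push_cast] <;> nlinarith
        rw [if_neg (by rw [this]; exact Int.not_even_iff_odd.mpr odd_one),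
          Set.indicator_of_notMem (by intro hmem; exact absurd hmem.2 (not_le.mpr h))]
    rw [hp.2]; norm_num
  · -- inductive step
    intro n hn ih
    have hrw : (fun t : ℝ => if Even ⌊(2:ℝ)^(n+1) * t⌋ then (1:ℝ) else 0)
        = fun t : ℝ => (fun u : ℝ => if Even ⌊(2:ℝ)^n * u⌋ then (1:ℝ) else 0) (2 * t) := by
      funext t; simp only [pow_succ]; ring_nf
    rw [hrw, intervalIntegral.integral_comp_mul_left
        (fun u : ℝ => if Even ⌊(2:ℝ)^n * u⌋ then (1:ℝ) else 0) (two_ne_zero)]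
    rw [mul_zero, mul_one, ← intervalIntegral.integral_add_adjacent_intervals
        (ii_dyad n 1 0 1) (ii_dyad n 1 1 2)]
    have h12 : (∫ u in (1:ℝ)..2, if Even ⌊(2:ℝ)^n * u⌋ then (1:ℝ) else 0)
        = ∫ u in (0:ℝ)..1, if Even ⌊(2:ℝ)^n * u⌋ then (1:ℝ) else 0 := by
      have := intervalIntegral.integral_comp_add_right
        (f := fun u : ℝ => if Even ⌊(2:ℝ)^n * u⌋ then (1:ℝ) else 0) (a := (0:ℝ)) (b := 1) 1
      rw [zero_add, one_add_one_eq_two] at this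
      rw [← this]
      apply intervalIntegral.integral_congr
      intro u _
      have hfl : ⌊(2:ℝ)^n * (u + 1)⌋ = ⌊(2:ℝ)^n * u⌋ + (2^n : ℤ) := by
        rw [show (2:ℝ)^n * (u+1) = 2^n * u + ((2^n : ℤ) : ℝ) by push_cast; ring,
          Int.floor_add_intCast]
      have heven : Even (⌊(2:ℝ)^n * u⌋ + (2^n : ℤ)) ↔ Even ⌊(2:ℝ)^n * u⌋ := by
        rw [Int.even_add]
        have : Even ((2:ℤ)^n) := Int.even_pow.mpr ⟨even_two, by omega⟩
        tauto
      simp only [hfl, heven]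
    rw [h12, ih]
    norm_num


lemma brk_eq_iff {z : ℝ} {i : ℕ} (hi : 1 ≤ i) :
    brk z = i ↔ (1 - 2*(1/2:ℝ)^i ≤ z ∧ z < 1 - (1/2:ℝ)^i) := by
  set S : Set ℕ := {k : ℕ | z + (1/2 : ℝ) ^ k < 1} with hS
  have hpow : (1/2:ℝ)^(i-1) = 2*(1/2)^i := by
    have h : i - 1 + 1 = i := Nat.succ_pred_eq_of_pos hi
    have h2 : (1/2:ℝ)^i = (1/2)^(i-1) * (1/2) := by rw [← pow_succ, h]
    rw [h2]; ring
  constructor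
  · intro h
    have hne : S.Nonempty := by
      by_contra hempty
      rw [Set.not_nonempty_iff_eq_empty] at hempty
      rw [brk, ← hS, hempty] at h
      simp [Nat.sInf_empty] at h
      omega
    have h1 : i ∈ S := h ▸ Nat.sInf_mem hne
    have h2 : (i-1) ∉ S := by
      intro hmem
      have := Nat.sInf_le hmem
      rw [brk, ← hS] at h
      omega
    rw [hS] at h1 h2
    simp only [Set.mem_setOf_eq, not_lt] at h1 h2
    rw [hpow] at h2
    exact ⟨by linarith, by linarith⟩
  · rintro ⟨h1, h2⟩
    rw [brk, ← hS]
    have hiS : i ∈ S := by rw [hS]; simp only [Set.mem_setOf_eq]; linarith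
    refine le_antisymm (Nat.sInf_le hiS) ?_
    by_contra hlt
    push_neg at hlt
    have hmem : sInf S ∈ S := Nat.sInf_mem ⟨i, hiS⟩
    have hle : sInf S ≤ i - 1 := by omega
    have hmono : (1/2:ℝ)^(i-1) ≤ (1/2)^(sInf S) :=
      pow_le_pow_of_le_one (by norm_num) (by norm_num) hle
    rw [hS] at hmem
    simp only [Set.mem_setOf_eq] at hmem
    rw [hpow] at hmono
    linarith

lemma ii_of_meas_bdd {f : ℝ → ℝ} (hm : Measurable f) (C : ℝ) (hb : ∀ x, ‖f x‖ ≤ C) (a b : ℝ) :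
    IntervalIntegrable f volume a b := by
  have hc : IntervalIntegrable (fun _ : ℝ => C) volume a b := intervalIntegrable_const
  rw [intervalIntegrable_iff] at hc ⊢
  exact hc.mono' hm.aestronglyMeasurable.restrict (ae_of_all _ hb)

lemma not_mem_Ico_left {x p q : ℝ} (h : x < p) : x ∉ Set.Ico p q :=
  fun hm => absurd hm.1 (not_le.mpr h)

lemma not_mem_Ico_right {x p q : ℝ} (h : q ≤ x) : x ∉ Set.Ico p q :=
  fun hm => absurd hm.2 (not_lt.mpr h)

lemma gLim_zero {x : ℝ} (h1 : x ∉ pA') (h2 : x ∉ pB'') (h3 : x ∉ pC') (h4 : x ∉ pD) :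
    gLim x = 0 := by
  rw [gLim, if_neg, if_neg h4]
  rintro ((h|h)|h)
  exacts [h1 h, h2 h, h3 h]

lemma gLim_one {x : ℝ} (h : x ∈ pA' ∪ pB'' ∪ pC') : gLim x = 1 := by rw [gLim, if_pos h]

lemma gFam_A {i : ℕ} {δ x : ℝ} (h : x ∈ pA) :
    gFam i δ x = if brk (9*x) = i then 1 else 0 := by
  simp only [gFam]; rw [if_pos h]

lemma gFam_A' {i : ℕ} {δ x : ℝ} (n1 : x ∉ pA) (h : x ∈ pA') :
    gFam i δ x = if brk (9*x-1) ≠ i then 1 else 0 := by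
  simp only [gFam]; rw [if_neg n1, if_pos h]

lemma gFam_B' {i : ℕ} {δ x : ℝ} (n1 : x ∉ pA) (n2 : x ∉ pA') (h : x ∈ pB') :
    gFam i δ x = if 9*x-3 ≤ (1+δ) * (1/2:ℝ)^i then 1 else 0 := by
  simp only [gFam]; rw [if_neg n1, if_neg n2, if_pos h]

lemma gFam_B'' {i : ℕ} {δ x : ℝ} (n1 : x ∉ pA) (n2 : x ∉ pA') (n3 : x ∉ pB') (h : x ∈ pB'') :
    gFam i δ x = if 9*x-4 ≤ 1 - (1+δ) * (1/2:ℝ)^i then 1 else 0 := by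
  simp only [gFam]; rw [if_neg n1, if_neg n2, if_neg n3, if_pos h]

lemma gFam_C {i : ℕ} {δ x : ℝ} (n1 : x ∉ pA) (n2 : x ∉ pA') (n3 : x ∉ pB') (n4 : x ∉ pB'')
    (h : x ∈ pC) :
    gFam i δ x = if Even ⌊(2:ℝ)^i * ((9*x-5)/2)⌋ then δ else 0 := by
  simp only [gFam]; rw [if_neg n1, if_neg n2, if_neg n3, if_neg n4, if_pos h]

lemma gFam_C' {i : ℕ} {δ x : ℝ} (n1 : x ∉ pA) (n2 : x ∉ pA') (n3 : x ∉ pB') (n4 : x ∉ pB'')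
    (n5 : x ∉ pC) (h : x ∈ pC') :
    gFam i δ x = if 9*x-7 ≤ 1-δ then 1 else 0 := by
  simp only [gFam]; rw [if_neg n1, if_neg n2, if_neg n3, if_neg n4, if_neg n5, if_pos h]

lemma gFam_D {i : ℕ} {δ x : ℝ} (n1 : x ∉ pA) (n2 : x ∉ pA') (n3 : x ∉ pB') (n4 : x ∉ pB'')
    (n5 : x ∉ pC) (n6 : x ∉ pC') (h : x ∈ pD) : gFam i δ x = 0.2 := by
  simp only [gFam]
  rw [if_neg n1, if_neg n2, if_neg n3, if_neg n4, if_neg n5, if_neg n6, if_pos h]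

lemma gFam_zero {i : ℕ} {δ x : ℝ} (n1 : x ∉ pA) (n2 : x ∉ pA') (n3 : x ∉ pB') (n4 : x ∉ pB'')
    (n5 : x ∉ pC) (n6 : x ∉ pC') (n7 : x ∉ pD) : gFam i δ x = 0 := by
  simp only [gFam]
  rw [if_neg n1, if_neg n2, if_neg n3, if_neg n4, if_neg n5, if_neg n6, if_neg n7]

lemma halfpow_le {i : ℕ} (hi : 1 ≤ i) : ((1/2:ℝ))^i ≤ 1/2 := by
  calc ((1/2:ℝ))^i ≤ (1/2:ℝ)^1 := pow_le_pow_of_le_one (by norm_num) (by norm_num) hi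
  _ = 1/2 := pow_one _

lemma pieceA (i : ℕ) (hi : 1 ≤ i) (δ : ℝ) :
    IntervalIntegrable (fun x => |gFam i δ x - gLim x|) volume 0 (1/9) ∧
    (∫ x in (0:ℝ)..(1/9), |gFam i δ x - gLim x|) = (1/2:ℝ)^i / 9 := by
  have hP0 : (0:ℝ) < (1/2:ℝ)^i := by positivity
  have hP2 := halfpow_le hi
  have key := piece (f := fun x => |gFam i δ x - gLim x|) (a := 0) (b := 1/9)
      (l := (1-2*(1/2:ℝ)^i)/9) (r := (1-(1/2:ℝ)^i)/9) 1
      (by linarith) (by linarith) (by linarith)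
      (s := {(1-2*(1/2:ℝ)^i)/9, (1-(1/2:ℝ)^i)/9, 1/9})
      (((Set.countable_singleton _).insert _).insert _) ?_
  · exact ⟨key.1, key.2.trans (by ring)⟩
  · intro x hx hs
    simp only [Set.mem_insert_iff, Set.mem_singleton_iff, not_or] at hs
    obtain ⟨hl, hr, h19⟩ := hs
    obtain ⟨hx0, hx1⟩ := hx
    have hx1' : x < 1/9 := lt_of_le_of_ne hx1 h19
    have mA : x ∈ pA := ⟨hx0.le, hx1'⟩
    rw [gLim_zero (not_mem_Ico_left (by linarith)) (not_mem_Ico_left (by linarith))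
        (not_mem_Ico_left (by linarith)) (not_mem_Ico_left (by linarith)), gFam_A mA, sub_zero]
    by_cases hb : brk (9*x) = i
    · rw [if_pos hb]
      rw [brk_eq_iff hi] at hb
      rw [Set.indicator_of_mem
        (Set.mem_Ioc.mpr ⟨lt_of_le_of_ne (by linarith [hb.1]) (Ne.symm hl), by linarith [hb.2]⟩)]
      exact abs_one
    · rw [if_neg hb, abs_zero, Set.indicator_of_notMem]
      intro hmem
      refine hb ((brk_eq_iff hi).mpr ⟨by linarith [hmem.1], ?_⟩)
      have : x < (1-(1/2:ℝ)^i)/9 := lt_of_le_of_ne hmem.2 hr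
      linarith

lemma pieceA' (i : ℕ) (hi : 1 ≤ i) (δ : ℝ) :
    IntervalIntegrable (fun x => |gFam i δ x - gLim x|) volume (1/9) (2/9) ∧
    (∫ x in (1/9:ℝ)..(2/9), |gFam i δ x - gLim x|) = (1/2:ℝ)^i / 9 := by
  have hP0 : (0:ℝ) < (1/2:ℝ)^i := by positivity
  have hP2 := halfpow_le hi
  have key := piece (f := fun x => |gFam i δ x - gLim x|) (a := 1/9) (b := 2/9)
      (l := (2-2*(1/2:ℝ)^i)/9) (r := (2-(1/2:ℝ)^i)/9) 1
      (by linarith) (by linarith) (by linarith)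
      (s := {(2-2*(1/2:ℝ)^i)/9, (2-(1/2:ℝ)^i)/9, 2/9})
      (((Set.countable_singleton _).insert _).insert _) ?_
  · exact ⟨key.1, key.2.trans (by ring)⟩
  · intro x hx hs
    simp only [Set.mem_insert_iff, Set.mem_singleton_iff, not_or] at hs
    obtain ⟨hl, hr, h29⟩ := hs
    obtain ⟨hx0, hx1⟩ := hx
    have hx1' : x < 2/9 := lt_of_le_of_ne hx1 h29
    have mA' : x ∈ pA' := ⟨hx0.le, hx1'⟩
    rw [gLim_one (Or.inl (Or.inl mA')), gFam_A' (not_mem_Ico_right (by linarith)) mA']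
    by_cases hb : brk (9*x-1) = i
    · rw [if_neg (not_not_intro hb)]
      rw [brk_eq_iff hi] at hb
      rw [Set.indicator_of_mem
        (Set.mem_Ioc.mpr ⟨lt_of_le_of_ne (by linarith [hb.1]) (Ne.symm hl), by linarith [hb.2]⟩)]
      norm_num
    · rw [if_pos hb, sub_self, abs_zero, Set.indicator_of_notMem]
      intro hmem
      refine hb ((brk_eq_iff hi).mpr ⟨by linarith [hmem.1], ?_⟩)
      have : x < (2-(1/2:ℝ)^i)/9 := lt_of_le_of_ne hmem.2 hr
      linarith

lemma pieceB (i : ℕ) (δ : ℝ) :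
    IntervalIntegrable (fun x => |gFam i δ x - gLim x|) volume (2/9) (3/9) ∧
    (∫ x in (2/9:ℝ)..(3/9), |gFam i δ x - gLim x|) = 0 := by
  have key := piece (f := fun x => |gFam i δ x - gLim x|) (a := 2/9) (b := 3/9)
      (l := 2/9) (r := 2/9) 0 le_rfl le_rfl (by norm_num)
      (s := {(3/9:ℝ)}) (Set.countable_singleton _) ?_
  · exact ⟨key.1, key.2.trans (by ring)⟩
  · intro x hx hs
    simp only [Set.mem_singleton_iff] at hs
    obtain ⟨hx0, hx1⟩ := hx
    have hx1' : x < 3/9 := lt_of_le_of_ne hx1 hs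
    rw [gLim_zero (not_mem_Ico_right (by linarith)) (not_mem_Ico_left (by linarith))
        (not_mem_Ico_left (by linarith)) (not_mem_Ico_left (by linarith)),
      gFam_zero (not_mem_Ico_right (by linarith)) (not_mem_Ico_right (by linarith))
        (not_mem_Ico_left (by linarith)) (not_mem_Ico_left (by linarith))
        (not_mem_Ico_left (by linarith)) (not_mem_Ico_left (by linarith))
        (not_mem_Ico_left (by linarith)),
      sub_zero, abs_zero, Set.indicator_of_notMem]
    intro hmem
    exact absurd (hmem.1.trans_le hmem.2) (lt_irrefl _)

lemma pieceB' (i : ℕ) (hi : 1 ≤ i) (δ : ℝ) (hδ0 : 0 < δ) (hδ1 : δ < 1) :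
    IntervalIntegrable (fun x => |gFam i δ x - gLim x|) volume (3/9) (4/9) ∧
    (∫ x in (3/9:ℝ)..(4/9), |gFam i δ x - gLim x|) = (1+δ) * (1/2:ℝ)^i / 9 := by
  have hP0 : (0:ℝ) < (1/2:ℝ)^i := by positivity
  have hP2 := halfpow_le hi
  have hd1 : (1+δ) * (1/2:ℝ)^i < 1 := by nlinarith
  have hd0 : (0:ℝ) < (1+δ) * (1/2:ℝ)^i := by positivity
  have key := piece (f := fun x => |gFam i δ x - gLim x|) (a := 3/9) (b := 4/9)
      (l := 3/9) (r := (3+(1+δ) * (1/2:ℝ)^i)/9) 1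
      le_rfl (by linarith) (by linarith)
      (s := {(4/9:ℝ)}) (Set.countable_singleton _) ?_
  · exact ⟨key.1, key.2.trans (by ring)⟩
  · intro x hx hs
    simp only [Set.mem_singleton_iff] at hs
    obtain ⟨hx0, hx1⟩ := hx
    have hx1' : x < 4/9 := lt_of_le_of_ne hx1 hs
    have mB' : x ∈ pB' := ⟨hx0.le, hx1'⟩
    rw [gLim_zero (not_mem_Ico_right (by linarith)) (not_mem_Ico_left (by linarith))
        (not_mem_Ico_left (by linarith)) (not_mem_Ico_left (by linarith)),
      gFam_B' (not_mem_Ico_right (by linarith)) (not_mem_Ico_right (by linarith)) mB',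
      sub_zero]
    by_cases hc : 9*x-3 ≤ (1+δ) * (1/2:ℝ)^i
    · rw [if_pos hc, Set.indicator_of_mem (Set.mem_Ioc.mpr ⟨hx0, by linarith⟩)]
      exact abs_one
    · rw [if_neg hc, abs_zero, Set.indicator_of_notMem]
      intro hmem
      exact hc (by linarith [hmem.2])

lemma pieceB'' (i : ℕ) (hi : 1 ≤ i) (δ : ℝ) (hδ0 : 0 < δ) (hδ1 : δ < 1) :
    IntervalIntegrable (fun x => |gFam i δ x - gLim x|) volume (4/9) (5/9) ∧
    (∫ x in (4/9:ℝ)..(5/9), |gFam i δ x - gLim x|) = (1+δ) * (1/2:ℝ)^i / 9 := by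
  have hP0 : (0:ℝ) < (1/2:ℝ)^i := by positivity
  have hP2 := halfpow_le hi
  have hd1 : (1+δ) * (1/2:ℝ)^i < 1 := by nlinarith
  have hd0 : (0:ℝ) < (1+δ) * (1/2:ℝ)^i := by positivity
  have key := piece (f := fun x => |gFam i δ x - gLim x|) (a := 4/9) (b := 5/9)
      (l := (5-(1+δ) * (1/2:ℝ)^i)/9) (r := 5/9) 1
      (by linarith) (by linarith) le_rfl
      (s := {(5/9:ℝ)}) (Set.countable_singleton _) ?_
  · exact ⟨key.1, key.2.trans (by ring)⟩
  · intro x hx hs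
    simp only [Set.mem_singleton_iff] at hs
    obtain ⟨hx0, hx1⟩ := hx
    have hx1' : x < 5/9 := lt_of_le_of_ne hx1 hs
    have mB'' : x ∈ pB'' := ⟨hx0.le, hx1'⟩
    rw [gLim_one (Or.inl (Or.inr mB'')),
      gFam_B'' (not_mem_Ico_right (by linarith)) (not_mem_Ico_right (by linarith))
        (not_mem_Ico_right (by linarith)) mB'']
    by_cases hc : 9*x-4 ≤ 1 - (1+δ) * (1/2:ℝ)^i
    · rw [if_pos hc, sub_self, abs_zero, Set.indicator_of_notMem]
      intro hmem
      have := hmem.1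
      linarith
    · rw [if_neg hc, Set.indicator_of_mem (Set.mem_Ioc.mpr ⟨by push_neg at hc; linarith, by linarith⟩)]
      norm_num

lemma pieceC (i : ℕ) (hi : 1 ≤ i) (δ : ℝ) (hδ0 : 0 < δ) (hδ1 : δ < 1) :
    IntervalIntegrable (fun x => |gFam i δ x - gLim x|) volume (5/9) (7/9) ∧
    (∫ x in (5/9:ℝ)..(7/9), |gFam i δ x - gLim x|) = δ / 9 := by
  set g0 : ℝ → ℝ := fun x => if Even ⌊(2:ℝ)^i * ((9*x-5)/2)⌋ then δ else 0 with hg0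
  have hmeas : Measurable g0 := by
    have h1 : Measurable fun x : ℝ => (9*x-5)/2 :=
      ((measurable_id.const_mul 9).sub measurable_const).div_const 2
    exact (meas_dyad i δ).comp h1
  have hii : IntervalIntegrable g0 volume (5/9) (7/9) := by
    refine ii_of_meas_bdd hmeas |δ| (fun x => ?_) _ _
    rw [hg0]
    dsimp only
    split
    · simp
    · simp
  have hae : ∀ᵐ x : ℝ, x ∈ Set.Ioc (5/9 : ℝ) (7/9) → |gFam i δ x - gLim x| = g0 x := by
    refine ae_except (Set.countable_singleton (7/9 : ℝ)) fun x hs hx => ?_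
    simp only [Set.mem_singleton_iff] at hs
    obtain ⟨hx0, hx1⟩ := hx
    have hx1' : x < 7/9 := lt_of_le_of_ne hx1 hs
    have mC : x ∈ pC := ⟨by linarith, hx1'⟩
    rw [gLim_zero (not_mem_Ico_right (by linarith)) (not_mem_Ico_right (by linarith))
        (not_mem_Ico_left (by linarith)) (not_mem_Ico_left (by linarith)),
      gFam_C (not_mem_Ico_right (by linarith)) (not_mem_Ico_right (by linarith))
        (not_mem_Ico_right (by linarith)) (not_mem_Ico_right (by linarith)) mC,
      sub_zero, hg0]
    dsimp only
    split
    · exact abs_of_pos hδ0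
    · exact abs_zero
  have key := congr_key (by norm_num : (5/9:ℝ) ≤ 7/9) hae hii
  refine ⟨key.1, key.2.trans ?_⟩
  have h1 : g0 = fun x : ℝ =>
      (fun u : ℝ => if Even ⌊(2:ℝ)^i * u⌋ then δ else (0:ℝ)) ((9/2) * x + (-5/2)) := by
    funext x
    have h : (9*x-5)/2 = (9/2)*x + (-5/2 : ℝ) := by ring
    rw [hg0]
    dsimp only
    rw [h]
  rw [h1, intervalIntegral.integral_comp_mul_add
      (fun u : ℝ => if Even ⌊(2:ℝ)^i * u⌋ then δ else (0:ℝ)) (by norm_num : (9/2:ℝ) ≠ 0) (-5/2)]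
  norm_num
  have h2 : (fun u : ℝ => if Even ⌊(2:ℝ)^i * u⌋ then δ else (0:ℝ))
      = fun u : ℝ => δ * (if Even ⌊(2:ℝ)^i * u⌋ then (1:ℝ) else 0) := by
    funext u; split <;> simp
  rw [h2, intervalIntegral.integral_const_mul, E_eq i hi]
  ring

lemma pieceC' (i : ℕ) (δ : ℝ) (hδ0 : 0 < δ) (hδ1 : δ < 1) :
    IntervalIntegrable (fun x => |gFam i δ x - gLim x|) volume (7/9) (8/9) ∧
    (∫ x in (7/9:ℝ)..(8/9), |gFam i δ x - gLim x|) = δ / 9 := by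
  have key := piece (f := fun x => |gFam i δ x - gLim x|) (a := 7/9) (b := 8/9)
      (l := (8-δ)/9) (r := 8/9) 1
      (by linarith) (by linarith) le_rfl
      (s := {(8/9:ℝ)}) (Set.countable_singleton _) ?_
  · exact ⟨key.1, key.2.trans (by ring)⟩
  · intro x hx hs
    simp only [Set.mem_singleton_iff] at hs
    obtain ⟨hx0, hx1⟩ := hx
    have hx1' : x < 8/9 := lt_of_le_of_ne hx1 hs
    have mC' : x ∈ pC' := ⟨hx0.le, hx1'⟩
    rw [gLim_one (Or.inr mC'),
      gFam_C' (not_mem_Ico_right (by linarith)) (not_mem_Ico_right (by linarith))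
        (not_mem_Ico_right (by linarith)) (not_mem_Ico_right (by linarith))
        (not_mem_Ico_right (by linarith)) mC']
    by_cases hc : 9*x-7 ≤ 1-δ
    · rw [if_pos hc, sub_self, abs_zero, Set.indicator_of_notMem]
      intro hmem
      have := hmem.1
      linarith
    · rw [if_neg hc, Set.indicator_of_mem (Set.mem_Ioc.mpr ⟨by push_neg at hc; linarith, by linarith⟩)]
      norm_num

lemma pieceD (i : ℕ) (δ : ℝ) :
    IntervalIntegrable (fun x => |gFam i δ x - gLim x|) volume (8/9) 1 ∧
    (∫ x in (8/9:ℝ)..1, |gFam i δ x - gLim x|) = 0 := by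
  have key := piece (f := fun x => |gFam i δ x - gLim x|) (a := 8/9) (b := 1)
      (l := 8/9) (r := 8/9) 0 le_rfl le_rfl (by norm_num)
      (s := {(1:ℝ)}) (Set.countable_singleton _) ?_
  · exact ⟨key.1, key.2.trans (by ring)⟩
  · intro x hx hs
    simp only [Set.mem_singleton_iff] at hs
    obtain ⟨hx0, hx1⟩ := hx
    have hx1' : x < 1 := lt_of_le_of_ne hx1 hs
    have mD : x ∈ pD := ⟨hx0.le, hx1'⟩
    rw [gLim, if_neg, if_pos mD,
      gFam_D (not_mem_Ico_right (by linarith)) (not_mem_Ico_right (by linarith))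
        (not_mem_Ico_right (by linarith)) (not_mem_Ico_right (by linarith))
        (not_mem_Ico_right (by linarith)) (not_mem_Ico_right (by linarith)) mD,
      sub_self, abs_zero, Set.indicator_of_notMem]
    · intro hmem
      exact absurd (hmem.1.trans_le hmem.2) (lt_irrefl _)
    · rintro ((h|h)|h)
      · exact not_mem_Ico_right (by linarith : (2:ℝ)/9 ≤ x) h
      · exact not_mem_Ico_right (by linarith : (5:ℝ)/9 ≤ x) h
      · exact not_mem_Ico_right (by linarith : (8:ℝ)/9 ≤ x) h


/-- `‖g_{i,δ} − g‖₁ = ((4 + 2δ)·2^{−i} + 2δ)/9` for `i ≥ 1` and `δ ∈ (0,1)`. -/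
theorem dist_gFam_gLim (i : ℕ) (hi : 1 ≤ i) (δ : ℝ) (hδ : δ ∈ Set.Ioo (0:ℝ) 1) :
    (∫ x in (0:ℝ)..1, |gFam i δ x - gLim x|) = ((4 + 2*δ) * (1/2:ℝ)^i + 2*δ) / 9 := by
  obtain ⟨hδ0, hδ1⟩ := hδ
  obtain ⟨j1, v1⟩ := pieceA i hi δ
  obtain ⟨j2, v2⟩ := pieceA' i hi δ
  obtain ⟨j3, v3⟩ := pieceB i δ
  obtain ⟨j4, v4⟩ := pieceB' i hi δ hδ0 hδ1
  obtain ⟨j5, v5⟩ := pieceB'' i hi δ hδ0 hδ1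
  obtain ⟨j6, v6⟩ := pieceC i hi δ hδ0 hδ1
  obtain ⟨j7, v7⟩ := pieceC' i δ hδ0 hδ1
  obtain ⟨j8, v8⟩ := pieceD i δ
  have e1 := intervalIntegral.integral_add_adjacent_intervals j1 j2
  have e2 := intervalIntegral.integral_add_adjacent_intervals (j1.trans j2) j3
  have e3 := intervalIntegral.integral_add_adjacent_intervals ((j1.trans j2).trans j3) j4
  have e4 := intervalIntegral.integral_add_adjacent_intervals (((j1.trans j2).trans j3).trans j4) j5
  have e5 := intervalIntegral.integral_add_adjacent_intervals
    ((((j1.trans j2).trans j3).trans j4).trans j5) j6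
  have e6 := intervalIntegral.integral_add_adjacent_intervals
    (((((j1.trans j2).trans j3).trans j4).trans j5).trans j6) j7
  have e7 := intervalIntegral.integral_add_adjacent_intervals
    ((((((j1.trans j2).trans j3).trans j4).trans j5).trans j6).trans j7) j8
  rw [← e7, ← e6, ← e5, ← e4, ← e3, ← e2, ← e1, v1, v2, v3, v4, v5, v6, v7, v8]
  ring
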